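/- Let S be a left cancellative monoid with neutral element e, and let R be an associative ring with an S-grading Γ whose support has exactly d elements. If the neutral component R_e is zero, then R^(d+1) = 0, i.e., any product of d+1 elements of R vanishes. -/

import Mathlib

/-- Product `a * l₀ * l₁ * ⋯` of a nonempty list of ring elements. -/
def mulList {R : Type*} [Mul R] (a : R) (l : List R) : R := l.foldl (· * ·) a

/-- `pw a n` is `aⁿ` for `n ≥ 1` (junk value `0` at `n = 0`). -/
def pw {R : Type*} [Mul R] [Zero R] (a : R) : ℕ → R
  | 0 => 0
  | 1 => a
  | n + 2 => pw a (n + 1) * a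

/-- Product of `n` elements given by `f` (junk `0` when `n = 0`). -/
def finProd {R : Type*} [Mul R] [Zero R] : {n : ℕ} → (Fin n → R) → R
  | 0, _ => 0
  | n + 1, f => mulList (f 0) (List.ofFn fun i : Fin n => f i.succ)

/-- `R ^ n = 0`: every product of `n` elements of `R` vanishes. -/
def PowZero (R : Type*) [Mul R] [Zero R] (n : ℕ) : Prop :=
  ∀ (a : R) (l : List R), l.length + 1 = n → mulList a l = 0

/-- `T ^ n = 0` for a subset `T` of a ring. -/
def PowZeroOn {R : Type*} [Mul R] [Zero R] (T : Set R) (n : ℕ) : Prop :=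
  ∀ (a : R) (l : List R), a ∈ T → (∀ x ∈ l, x ∈ T) → l.length + 1 = n → mulList a l = 0

/-- `a` is nilpotent: `aⁿ = 0` for some `n ≥ 1`. -/
def IsNilE {R : Type*} [Mul R] [Zero R] (a : R) : Prop := ∃ n, 1 ≤ n ∧ pw a n = 0

/-- A nil ring: every element is nilpotent. -/
def IsNilRing (R : Type*) [Mul R] [Zero R] : Prop := ∀ a : R, IsNilE a

/-- An `S`-grading of the ring `R`: a direct sum decomposition into additive
subgroups with `R_g R_h ⊆ R_{gh}`. -/
structure IsGrading {S R : Type*} [Monoid S] [NonUnitalRing R] [DecidableEq S]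
    (A : S → AddSubgroup R) : Prop where
  mul_mem : ∀ {g h : S} {x y : R}, x ∈ A g → y ∈ A h → x * y ∈ A (g * h)
  isInternal : DirectSum.IsInternal A

/-- Grading by an additively written monoid. -/
structure IsAddGrading {S R : Type*} [AddMonoid S] [NonUnitalRing R] [DecidableEq S]
    (A : S → AddSubgroup R) : Prop where
  mul_mem : ∀ {g h : S} {x y : R}, x ∈ A g → y ∈ A h → x * y ∈ A (g + h)
  isInternal : DirectSum.IsInternal A

/-- The subset `T` of a ring is `f`-commutative: there are a semigroup `G` acting on it
from the left and a map `f` with `a*b = f(a,b)·(b*a)`. -/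
def IsFCommutativeOn {R : Type*} [Mul R] (T : Set R) : Prop :=
  ∃ (G : Type) (_ : Semigroup G) (act : G → R → R),
    (∀ l m : G, ∀ x : R, x ∈ T → act (l * m) x = act l (act m x)) ∧
    (∀ l : G, ∀ x : R, x ∈ T → act l x ∈ T) ∧
    (∀ l : G, ∀ x y : R, x ∈ T → y ∈ T → act l (x * y) = act l x * y) ∧
    ∃ f : R → R → G, ∀ a b : R, a ∈ T → b ∈ T → a * b = act (f a b) (b * a)

/-- The ring `R` is `f`-commutative. -/
def IsFCommutative (R : Type*) [Mul R] : Prop :=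
  ∃ (G : Type) (_ : Semigroup G) (act : G → R → R),
    (∀ l m : G, ∀ x : R, act (l * m) x = act l (act m x)) ∧
    (∀ l : G, ∀ x y : R, act l (x * y) = act l x * y) ∧
    ∃ f : R → R → G, ∀ a b : R, a * b = act (f a b) (b * a)

/-- The order of `g`: least `n ≥ 1` with `gⁿ = 1`, and `0` if no such `n` exists. -/
noncomputable def ordOf {S : Type*} [Monoid S] (g : S) : ℕ := sInf {n | 1 ≤ n ∧ g ^ n = 1}

section aux
variable {S R : Type*} [Monoid S] [NonUnitalRing R]

theorem mulList_cons' (a b : R) (m : List R) : mulList a (b :: m) = mulList (a * b) m := rfl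

theorem mul_mulList' (a b : R) (m : List R) : mulList (a * b) m = a * mulList b m := by
  induction m generalizing b with
  | nil => rfl
  | cons c m ih => rw [mulList_cons', mulList_cons', mul_assoc, ih]

theorem mulList_zero' (m : List R) : mulList (0 : R) m = 0 := by
  induction m with
  | nil => rfl
  | cons c m ih => rw [mulList_cons', zero_mul, ih]

theorem mulList_append' (a : R) (m n : List R) :
    mulList a (m ++ n) = mulList (mulList a m) n := List.foldl_append

theorem mulList_grade' [DecidableEq S] {A : S → AddSubgroup R}
    (hmul : ∀ {g h : S} {x y : R}, x ∈ A g → y ∈ A h → x * y ∈ A (g * h)) :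
    ∀ {m : List R} {ms : List S} {a : R} {g : S}, a ∈ A g →
      List.Forall₂ (fun x h => x ∈ A h) m ms → mulList a m ∈ A (g * ms.prod) := by
  intro m ms a g ha hf
  induction hf generalizing a g with
  | nil => simpa [mulList] using ha
  | @cons x h m ms hx _ ih =>
    rw [mulList_cons', List.prod_cons, ← mul_assoc]
    exact ih (hmul ha hx)

end aux

theorem stmt_0 {S R : Type*} [Monoid S] [IsLeftCancelMul S] [DecidableEq S]
    [NonUnitalRing R] (A : S → AddSubgroup R) (hA : IsGrading A)
    (d : ℕ) (hfin : {g : S | A g ≠ ⊥}.Finite) (hcard : hfin.toFinset.card = d)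
    (he : A 1 = ⊥) : PowZero R (d + 1) := by
  -- every element is a sum of homogeneous elements
  have hhom : ∀ r : R, r ∈ AddSubgroup.closure {x : R | ∃ g, x ∈ A g} := by
    intro r
    obtain ⟨x, rfl⟩ := hA.isInternal.surjective r
    induction x using DirectSum.induction_on with
    | zero => rw [map_zero]; exact zero_mem _
    | of i y =>
      rw [DirectSum.coeAddMonoidHom_of]
      exact AddSubgroup.subset_closure ⟨i, y.2⟩
    | add x y hx hy => rw [map_add]; exact add_mem hx hy
  -- choosing degrees for a list of homogeneous elements
  have hgs : ∀ l : List R, (∀ x ∈ l, ∃ g, x ∈ A g) →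
      ∃ gs, List.Forall₂ (fun x h => x ∈ A h) l gs := by
    intro l
    induction l with
    | nil => exact fun _ => ⟨[], .nil⟩
    | cons x m ih =>
      intro h
      obtain ⟨g, hg⟩ := h x (by simp)
      obtain ⟨gs, hf⟩ := ih (fun y hy => h y (by simp [hy]))
      exact ⟨g :: gs, .cons hg hf⟩
  -- core: homogeneous products of length d+1 vanish
  have hcore : ∀ (a : R) (l : List R), (∃ g, a ∈ A g) → (∀ x ∈ l, ∃ g, x ∈ A g) →
      l.length = d → mulList a l = 0 := by
    rintro a l ⟨g0, ha⟩ hl hlen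
    obtain ⟨gs, hf⟩ := hgs l hl
    by_contra hne
    have hdecomp : ∀ k, mulList a l = mulList (mulList a (l.take k)) (l.drop k) := by
      intro k
      conv_lhs => rw [← List.take_append_drop k l]
      rw [mulList_append']
    have hpne : ∀ k, mulList a (l.take k) ≠ 0 := fun k h =>
      hne (by rw [hdecomp k, h, mulList_zero'])
    have hpk : ∀ k, mulList a (l.take k) ∈ A (g0 * (gs.take k).prod) := fun k =>
      mulList_grade' hA.mul_mem ha (List.forall₂_take k hf)
    have hsupp : ∀ k : Fin (d + 1), g0 * (gs.take (k : ℕ)).prod ∈ hfin.toFinset := by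
      intro k
      rw [Set.Finite.mem_toFinset]
      intro hbot
      have := hpk (k : ℕ)
      rw [hbot] at this
      exact hpne _ (AddSubgroup.mem_bot.mp this)
    obtain ⟨i, -, j, -, hij, hs⟩ :=
      Finset.exists_ne_map_eq_of_card_lt_of_maps_to
        (s := (Finset.univ : Finset (Fin (d + 1)))) (by rw [hcard]; simp)
        (fun k _ => hsupp k)
    have key : ∀ i j : Fin (d + 1), (i : ℕ) < (j : ℕ) →
        g0 * (gs.take (i : ℕ)).prod = g0 * (gs.take (j : ℕ)).prod → False := by
      clear hij hs i j
      intro i j hlt hsij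
      have hji : (j : ℕ) = (i : ℕ) + ((j : ℕ) - (i : ℕ)) := by omega
      have htakegs : gs.take (j : ℕ) =
          gs.take (i : ℕ) ++ (gs.drop (i : ℕ)).take ((j : ℕ) - (i : ℕ)) := by
        conv_lhs => rw [hji]
        exact List.take_add ..
      have ht1 : ((gs.drop (i : ℕ)).take ((j : ℕ) - (i : ℕ))).prod = 1 := by
        apply mul_left_cancel (a := g0 * (gs.take (i : ℕ)).prod)
        rw [mul_one, mul_assoc, ← List.prod_append, ← htakegs, ← hsij]
      -- the corresponding slice of l
      have hfsl : List.Forall₂ (fun x h => x ∈ A h)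
          ((l.drop (i : ℕ)).take ((j : ℕ) - (i : ℕ)))
          ((gs.drop (i : ℕ)).take ((j : ℕ) - (i : ℕ))) :=
        List.forall₂_take _ (List.forall₂_drop _ hf)
      have hslne : (l.drop (i : ℕ)).take ((j : ℕ) - (i : ℕ)) ≠ [] := by
        have hjd : (j : ℕ) ≤ d := by omega
        have : ((l.drop (i : ℕ)).take ((j : ℕ) - (i : ℕ))).length
            = min ((j : ℕ) - (i : ℕ)) (d - (i : ℕ)) := by
          simp [List.length_take, List.length_drop, hlen]
        intro h
        rw [h] at this
        simp at this
        omega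
      obtain ⟨y, rest, hyl⟩ := List.exists_cons_of_ne_nil hslne
      rw [hyl] at hfsl
      obtain ⟨h, hs', hy, hrest, hgsl⟩ := List.forall₂_cons_left_iff.mp hfsl
      · have hzero : mulList y rest = 0 := by
          have := mulList_grade' hA.mul_mem hy hrest
          rw [show h * List.prod hs' = 1 by
              rw [← List.prod_cons, ← hgsl]; exact ht1, he] at this
          exact AddSubgroup.mem_bot.mp this
        apply hpne (j : ℕ)
        have htakel : l.take (j : ℕ) =
            l.take (i : ℕ) ++ (l.drop (i : ℕ)).take ((j : ℕ) - (i : ℕ)) := by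
          conv_lhs => rw [hji]
          exact List.take_add ..
        rw [htakel, hyl, mulList_append', mulList_cons', mul_mulList', hzero, mul_zero]
    rcases lt_or_gt_of_ne hij with h | h
    · exact key i j h hs
    · exact key j i h hs.symm
  -- span: any product lies in the subgroup generated by homogeneous products
  have hspan : ∀ (l : List R) (a : R), mulList a l ∈ AddSubgroup.closure
      {y : R | ∃ (b : R) (m : List R), (∃ g, b ∈ A g) ∧ (∀ x ∈ m, ∃ g, x ∈ A g) ∧
        m.length = l.length ∧ mulList b m = y} := by
    intro l
    induction l using List.reverseRecOn with
    | nil =>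
      intro a
      refine AddSubgroup.closure_mono ?_ (hhom a)
      rintro x ⟨g, hg⟩
      exact ⟨x, [], ⟨g, hg⟩, by simp, rfl, rfl⟩
    | append_singleton m c ih =>
      intro a
      rw [mulList_append']
      simp only [List.length_append, List.length_singleton]
      show mulList a m * c ∈ _
      refine AddSubgroup.closure_induction ?_ ?_ ?_ ?_ (ih a)
      · rintro y ⟨b, m', hb, hm', hlen', rfl⟩
        refine AddSubgroup.closure_induction ?_ ?_ ?_ ?_ (hhom c)
        · intro z hz
          refine AddSubgroup.subset_closure ⟨b, m' ++ [z], hb, ?_, by simp [hlen'], ?_⟩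
          · intro x hx
            rcases List.mem_append.mp hx with h | h
            · exact hm' x h
            · simp only [List.mem_singleton] at h
              subst h; exact hz
          · rw [mulList_append']; rfl
        · rw [mul_zero]; exact zero_mem _
        · intro u v _ _ hu hv; rw [mul_add]; exact add_mem hu hv
        · intro u _ hu; rw [mul_neg]; exact neg_mem hu
      · rw [zero_mul]; exact zero_mem _
      · intro u v _ _ hu hv; rw [add_mul]; exact add_mem hu hv
      · intro u _ hu; rw [neg_mul]; exact neg_mem hu
  intro a l hlen
  have hmem := hspan l a
  have hsub : {y : R | ∃ (b : R) (m : List R), (∃ g, b ∈ A g) ∧ (∀ x ∈ m, ∃ g, x ∈ A g) ∧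
      m.length = l.length ∧ mulList b m = y} ⊆ (⊥ : AddSubgroup R) := by
    rintro y ⟨b, m, hb, hm, hlm, rfl⟩
    exact AddSubgroup.mem_bot.mpr (hcore b m hb hm (by omega))
  exact AddSubgroup.mem_bot.mp ((AddSubgroup.closure_le ⊥).mpr hsub hmem)
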